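/- The dimension of the space of singular vectors $S^{(R)}_\Gamma[|\Lambda|-2m]$ of weight $|\Lambda|-2m$ in the tensor product $M^{(r_1)}_{\lambda_1}(\gamma_1)\otimes\cdots\otimes M^{(r_n)}_{\lambda_n}(\gamma_n)$ of confluent Verma modules equals $\binom{|R|+n+m-2}{m}$, where $|R|=r_1+\cdots+r_n$, provided $\gamma_1^{(r_1)}\ne 0$. -/

import Mathlib

set_option linter.unusedSectionVars false

open Function Finset Submodule

namespace Stmt11

variable {ι : Type*} [Fintype ι] [DecidableEq ι]

lemma sum_mul_addE (g J : ι → ℕ) (y : ι) :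
    ∑ x, g x * (Function.update J y (J y + 1)) x = (∑ x, g x * J x) + g y := by
  have h : (fun x => g x * (Function.update J y (J y + 1)) x)
      = Function.update (fun x => g x * J x) y (g y * (J y + 1)) := by
    funext x
    by_cases hx : x = y
    · subst hx; simp
    · simp [Function.update_apply, hx]
  rw [h, Finset.sum_update_of_mem (Finset.mem_univ y),
    Finset.sum_eq_sum_sdiff_singleton_add (Finset.mem_univ y) (fun x => g x * J x)]
  rw [Nat.mul_add, Nat.mul_one]
  omega

lemma sum_addE (J : ι → ℕ) (y : ι) :
    ∑ x, (Function.update J y (J y + 1)) x = (∑ x, J x) + 1 := by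
  have := sum_mul_addE (fun _ => 1) J y
  simpa using this

lemma decompose (J : ι → ℕ) (hJ : ∑ x, J x ≠ 0) :
    ∃ (y : ι) (J' : ι → ℕ), J = Function.update J' y (J' y + 1) := by
  obtain ⟨y, -, hy⟩ := Finset.exists_ne_zero_of_sum_ne_zero hJ
  refine ⟨y, Function.update J y (J y - 1), ?_⟩
  funext z
  by_cases hz : z = y
  · subst hz; simp; omega
  · simp [Function.update_apply, hz]

lemma subE_addE (J : ι → ℕ) (y : ι) :
    Function.update (Function.update J y (J y + 1)) y
      ((Function.update J y (J y + 1)) y - 1) = J := by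
  funext z
  by_cases hz : z = y
  · subst hz; simp
  · simp [Function.update_apply, hz]

lemma subE_addE_comm (J : ι → ℕ) {x y : ι} (hxy : y ≠ x) :
    Function.update (Function.update J y (J y + 1)) x
      ((Function.update J y (J y + 1)) x - 1) =
    Function.update (Function.update J x (J x - 1)) y
      ((Function.update J x (J x - 1)) y + 1) := by
  funext z
  by_cases hz : z = x
  · subst hz
    simp [Function.update_apply, hxy, Ne.symm hxy]
  · by_cases hz' : z = y
    · subst hz'
      simp [Function.update_apply, hxy, hz]
    · simp [Function.update_apply, hz, hz']

lemma addE_subE_smul {M : Type*} [AddCommGroup M] [Module ℂ M] (f : (ι → ℕ) → M)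
    (J : ι → ℕ) (x : ι) :
    ((J x : ℕ) : ℂ) • f (Function.update (Function.update J x (J x - 1)) x
      ((Function.update J x (J x - 1)) x + 1)) = ((J x : ℕ) : ℂ) • f J := by
  rcases Nat.eq_zero_or_pos (J x) with h | h
  · simp [h]
  · have he : Function.update (Function.update J x (J x - 1)) x
        ((Function.update J x (J x - 1)) x + 1) = J := by
      funext z
      by_cases hz : z = x
      · subst hz; simp; omega
      · simp [Function.update_apply, hz]
    rw [he]

lemma single_le_sum' (J : ι → ℕ) (y : ι) : J y ≤ ∑ x, J x :=
  Finset.single_le_sum (fun i _ => Nat.zero_le (J i)) (Finset.mem_univ y)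

section Main

variable {n : ℕ} {r : Fin n → ℕ} {V : Type*} [AddCommGroup V] [Module ℂ V]
  {E : Module.End ℂ V} {F H : (Σ i : Fin n, Fin (r i + 1)) → Module.End ℂ V}
  {v : V} {gam : (Σ i : Fin n, Fin (r i + 1)) → ℂ}
  {mono : ((Σ i : Fin n, Fin (r i + 1)) → ℕ) → V}

/-- the filtration weight -/
def wtot (r : Fin n → ℕ) (J : (Σ i : Fin n, Fin (r i + 1)) → ℕ) : ℕ :=
  ∑ z, (r z.1 - (z.2 : ℕ)) * J z

lemma wtot_addE (J : (Σ i : Fin n, Fin (r i + 1)) → ℕ) (y) :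
    wtot r (Function.update J y (J y + 1)) = wtot r J + (r y.1 - (y.2 : ℕ)) :=
  sum_mul_addE _ J y

lemma Fmap (hmonoStep : ∀ J x, mono (Function.update J x (J x + 1)) = F x (mono J))
    {y : (Σ i : Fin n, Fin (r i + 1))} {S T : Set ((Σ i : Fin n, Fin (r i + 1)) → ℕ)}
    (hST : ∀ K ∈ S, Function.update K y (K y + 1) ∈ T)
    {u : V} (hu : u ∈ span ℂ (mono '' S)) : F y u ∈ span ℂ (mono '' T) := by
  have h1 : F y u ∈ Submodule.map (F y) (span ℂ (mono '' S)) := ⟨u, hu, rfl⟩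
  rw [Submodule.map_span] at h1
  refine Submodule.span_le.2 ?_ h1
  rintro - ⟨-, ⟨K, hK, rfl⟩, rfl⟩
  exact Submodule.subset_span ⟨_, hST K hK, hmonoStep K y⟩

lemma Hmem (hHv : ∀ x, H x v = gam x • v)
    (hHF : ∀ (i j : Fin n) (p : Fin (r i + 1)) (q : Fin (r j + 1)),
      H ⟨i, p⟩ * F ⟨j, q⟩ - F ⟨j, q⟩ * H ⟨i, p⟩ =
        if h : i = j ∧ (p : ℕ) + (q : ℕ) ≤ r i then
          (-2 : ℂ) • F ⟨i, ⟨(p : ℕ) + (q : ℕ), Nat.lt_succ_of_le h.2⟩⟩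
        else 0)
    (hmono0 : mono 0 = v)
    (hmonoStep : ∀ J x, mono (Function.update J x (J x + 1)) = F x (mono J)) :
    ∀ (m : ℕ) (J : (Σ i : Fin n, Fin (r i + 1)) → ℕ), ∑ z, J z = m →
      ∀ x, H x (mono J) - gam x • mono J ∈
        span ℂ (mono '' {K | ∑ z, K z = m ∧ wtot r K + (x.2 : ℕ) ≤ wtot r J}) := by
  intro m
  induction m with
  | zero =>
    intro J hJ x
    have hJ0 : J = 0 := by
      funext z
      have := Finset.sum_eq_zero_iff.1 hJ z (Finset.mem_univ z)
      simpa using this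
    rw [hJ0, hmono0, hHv, sub_self]
    exact Submodule.zero_mem _
  | succ m ih =>
    intro J hJ x
    obtain ⟨y, J', rfl⟩ := decompose J (by omega)
    have hdeg : ∑ z, J' z = m := by have := sum_addE J' y; omega
    have hw : wtot r (Function.update J' y (J' y + 1)) = wtot r J' + (r y.1 - (y.2 : ℕ)) :=
      wtot_addE J' y
    have hc := hHF x.1 y.1 x.2 y.2
    simp only [Sigma.eta] at hc
    have happ : H x (F y (mono J')) = F y (H x (mono J')) +
        ((if h : x.1 = y.1 ∧ (x.2 : ℕ) + (y.2 : ℕ) ≤ r x.1 then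
          (-2 : ℂ) • F ⟨x.1, ⟨(x.2 : ℕ) + (y.2 : ℕ), Nat.lt_succ_of_le h.2⟩⟩
        else 0) : Module.End ℂ V) (mono J') := by
      have := congrArg (fun (T : Module.End ℂ V) => T (mono J')) hc
      simp only [LinearMap.sub_apply, Module.End.mul_apply] at this
      rw [← this]
      abel
    rw [hmonoStep J' y, happ]
    have ihx := ih J' hdeg x
    set q' := H x (mono J') - gam x • mono J' with hq'
    have hHx : H x (mono J') = gam x • mono J' + q' := by rw [hq']; abel
    rw [hHx, map_add, map_smul, ← hmonoStep J' y]
    have key : F y q' + (if h : x.1 = y.1 ∧ (x.2 : ℕ) + (y.2 : ℕ) ≤ r x.1 then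
          (-2 : ℂ) • F ⟨x.1, ⟨(x.2 : ℕ) + (y.2 : ℕ), Nat.lt_succ_of_le h.2⟩⟩
        else (0 : Module.End ℂ V)) (mono J') ∈
        span ℂ (mono '' {K | ∑ z, K z = m + 1 ∧
          wtot r K + (x.2 : ℕ) ≤ wtot r (Function.update J' y (J' y + 1))}) := by
      refine Submodule.add_mem _ ?_ ?_
      · refine Fmap hmonoStep ?_ ihx
        intro K hK
        obtain ⟨hK1, hK2⟩ := hK
        refine ⟨by rw [sum_addE]; omega, ?_⟩
        rw [wtot_addE, hw]
        omega
      · by_cases h : x.1 = y.1 ∧ (x.2 : ℕ) + (y.2 : ℕ) ≤ r x.1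
        · rw [dif_pos h]
          rw [LinearMap.smul_apply, ← hmonoStep]
          refine Submodule.smul_mem _ _ (Submodule.subset_span ⟨_, ⟨?_, ?_⟩, rfl⟩)
          · rw [sum_addE]; omega
          · rw [wtot_addE, hw]
            have h1 : (y.2 : ℕ) ≤ r y.1 := Fin.is_le y.2
            have h2 : r y.1 = r x.1 := by rw [h.1]
            have h3 := h.2
            simp only []
            omega
        · rw [dif_neg h]
          simp only [LinearMap.zero_apply]
          exact Submodule.zero_mem _
    convert key using 1
    abel

lemma Emem (hEv : E v = 0)
    (hHv : ∀ x, H x v = gam x • v)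
    (hEF : ∀ x, E * F x - F x * E = H x)
    (hHF : ∀ (i j : Fin n) (p : Fin (r i + 1)) (q : Fin (r j + 1)),
      H ⟨i, p⟩ * F ⟨j, q⟩ - F ⟨j, q⟩ * H ⟨i, p⟩ =
        if h : i = j ∧ (p : ℕ) + (q : ℕ) ≤ r i then
          (-2 : ℂ) • F ⟨i, ⟨(p : ℕ) + (q : ℕ), Nat.lt_succ_of_le h.2⟩⟩
        else 0)
    (hmono0 : mono 0 = v)
    (hmonoStep : ∀ J x, mono (Function.update J x (J x + 1)) = F x (mono J))
    (hr : ∀ i, 0 < r i)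
    {xs : Σ i : Fin n, Fin (r i + 1)} (hxs : (xs.2 : ℕ) = r xs.1) :
    ∀ (m : ℕ) (J : (Σ i : Fin n, Fin (r i + 1)) → ℕ), ∑ z, J z = m →
      E (mono J) - (gam xs * (J xs : ℕ)) • mono (Function.update J xs (J xs - 1)) ∈
        span ℂ (mono '' {K | (∑ z, K z) + 1 = m ∧ wtot r K ≤ wtot r J ∧
          (wtot r K < wtot r J ∨ J xs ≤ K xs)}) := by
  intro m
  induction m with
  | zero =>
    intro J hJ
    have hJ0 : J = 0 := by
      funext z
      have := Finset.sum_eq_zero_iff.1 hJ z (Finset.mem_univ z)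
      simpa using this
    subst hJ0
    simp only [Pi.zero_apply, Nat.cast_zero, mul_zero, zero_smul, sub_zero, hmono0, hEv]
    exact Submodule.zero_mem _
  | succ m ih =>
    intro J hJ
    obtain ⟨y, J', rfl⟩ := decompose J (by omega)
    have hdeg : ∑ z, J' z = m := by have := sum_addE J' y; omega
    set J : ((Σ i : Fin n, Fin (r i + 1)) → ℕ) := Function.update J' y (J' y + 1) with hJdef
    have hw : wtot r J = wtot r J' + (r y.1 - (y.2 : ℕ)) := wtot_addE J' y
    have happ : E (F y (mono J')) = F y (E (mono J')) + H y (mono J') := by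
      have := congrArg (fun (T : Module.End ℂ V) => T (mono J')) (hEF y)
      simp only [LinearMap.sub_apply, Module.End.mul_apply] at this
      rw [← this]
      abel
    have ihE := ih J' hdeg
    set qE := E (mono J') - (gam xs * (J' xs : ℕ)) •
      mono (Function.update J' xs (J' xs - 1)) with hqE
    have hE' : E (mono J') = (gam xs * (J' xs : ℕ)) •
        mono (Function.update J' xs (J' xs - 1)) + qE := by rw [hqE]; abel
    have ihH := Hmem hHv hHF hmono0 hmonoStep m J' hdeg y
    set qH := H y (mono J') - gam y • mono J' with hqH
    have hH' : H y (mono J') = gam y • mono J' + qH := by rw [hqH]; abel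
    -- transport lemma for qE
    have htrans : ∀ K ∈ {K | (∑ z, K z) + 1 = m ∧ wtot r K ≤ wtot r J' ∧
          (wtot r K < wtot r J' ∨ J' xs ≤ K xs)},
        Function.update K y (K y + 1) ∈ {K | (∑ z, K z) + 1 = m + 1 ∧ wtot r K ≤ wtot r J ∧
          (wtot r K < wtot r J ∨ J xs ≤ K xs)} := by
      intro K hK
      obtain ⟨hK1, hK2, hK3⟩ := hK
      refine ⟨by rw [sum_addE]; omega, by rw [wtot_addE, hw]; omega, ?_⟩
      rcases hK3 with h3 | h3
      · left; rw [wtot_addE, hw]; omega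
      · right
        rw [hJdef]
        by_cases hy : y = xs
        · subst hy
          simp only [Function.update_self]
          omega
        · simp only [Function.update_of_ne (Ne.symm hy)]
          exact h3
    have hmonoJ : mono J = F y (mono J') := hmonoStep J' y
    have hEJ : E (mono J) = (gam xs * (J' xs : ℕ)) •
        mono (Function.update (Function.update J' xs (J' xs - 1)) y
          ((Function.update J' xs (J' xs - 1)) y + 1)) + F y qE
        + (gam y • mono J' + qH) := by
      rw [hmonoJ, happ, hE', hH', map_add, map_smul, hmonoStep]
    -- membership of F y qE
    have hFqE : F y qE ∈ span ℂ (mono '' {K | (∑ z, K z) + 1 = m + 1 ∧ wtot r K ≤ wtot r J ∧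
          (wtot r K < wtot r J ∨ J xs ≤ K xs)}) := Fmap hmonoStep htrans ihE
    -- membership of qH
    have hsubset : {K | ∑ z, K z = m ∧ wtot r K + (y.2 : ℕ) ≤ wtot r J'} ⊆
        {K | (∑ z, K z) + 1 = m + 1 ∧ wtot r K ≤ wtot r J ∧
          (wtot r K < wtot r J ∨ J xs ≤ K xs)} := by
      intro K hK
      obtain ⟨hK1, hK2⟩ := hK
      have h1 : (y.2 : ℕ) ≤ r y.1 := Fin.is_le y.2
      have h2 := hr y.1
      exact ⟨by omega, by omega, Or.inl (by omega)⟩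
    have hqHmem : qH ∈ span ℂ (mono '' {K | (∑ z, K z) + 1 = m + 1 ∧ wtot r K ≤ wtot r J ∧
          (wtot r K < wtot r J ∨ J xs ≤ K xs)}) :=
      Submodule.span_mono (Set.image_mono hsubset) ihH
    by_cases hy : xs = y
    · subst hy
      have hJxs : J xs = J' xs + 1 := by rw [hJdef]; simp
      have hsubJ : Function.update J xs (J xs - 1) = J' := subE_addE J' xs
      have haux : (gam xs * ((J' xs : ℕ) : ℂ)) •
          mono (Function.update (Function.update J' xs (J' xs - 1)) xs
            ((Function.update J' xs (J' xs - 1)) xs + 1)) =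
          (gam xs * ((J' xs : ℕ) : ℂ)) • mono J' := by
        rw [mul_smul, mul_smul, addE_subE_smul mono J' xs]
      rw [hEJ, haux, hsubJ, hJxs] 
      rw [hJxs] at hFqE hqHmem
      have hcast : (gam xs * ((J' xs + 1 : ℕ) : ℂ)) • mono J' =
          (gam xs * ((J' xs : ℕ) : ℂ)) • mono J' + gam xs • mono J' := by
        push_cast
        rw [mul_add, mul_one, add_smul]
      rw [hcast]
      have habel : ∀ A B C D : V, A + B + (C + D) - (A + C) = B + D := by
        intros; abel
      rw [habel]
      exact Submodule.add_mem _ hFqE hqHmem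
    · have hJxs : J xs = J' xs := by
        rw [hJdef]; exact Function.update_of_ne hy _ _
      have hsubJ : Function.update J xs (J xs - 1) =
          Function.update (Function.update J' xs (J' xs - 1)) y
            ((Function.update J' xs (J' xs - 1)) y + 1) := subE_addE_comm J' (Ne.symm hy)
      rw [hEJ, hsubJ, hJxs]
      rw [hJxs] at hFqE hqHmem
      have habel : ∀ A B C : V, A + B + C - A = B + C := by intros; abel
      rw [habel]
      refine Submodule.add_mem _ hFqE (Submodule.add_mem _ ?_ hqHmem)
      refine Submodule.smul_mem _ _ (Submodule.subset_span ⟨J', ⟨by omega, by omega, ?_⟩, rfl⟩)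
      right
      omega


lemma addE_subE {ι : Type*} [DecidableEq ι] (J : ι → ℕ) (x : ι) (h : J x ≠ 0) :
    Function.update (Function.update J x (J x - 1)) x
      ((Function.update J x (J x - 1)) x + 1) = J := by
  funext z
  by_cases hz : z = x
  · subst hz; simp; omega
  · simp [Function.update_apply, hz]

lemma mono_mem_map (hEv : E v = 0)
    (hHv : ∀ x, H x v = gam x • v)
    (hEF : ∀ x, E * F x - F x * E = H x)
    (hHF : ∀ (i j : Fin n) (p : Fin (r i + 1)) (q : Fin (r j + 1)),
      H ⟨i, p⟩ * F ⟨j, q⟩ - F ⟨j, q⟩ * H ⟨i, p⟩ =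
        if h : i = j ∧ (p : ℕ) + (q : ℕ) ≤ r i then
          (-2 : ℂ) • F ⟨i, ⟨(p : ℕ) + (q : ℕ), Nat.lt_succ_of_le h.2⟩⟩
        else 0)
    (hmono0 : mono 0 = v)
    (hmonoStep : ∀ J x, mono (Function.update J x (J x + 1)) = F x (mono J))
    (hr : ∀ i, 0 < r i)
    {xs : Σ i : Fin n, Fin (r i + 1)} (hxs : (xs.2 : ℕ) = r xs.1)
    (hgam : gam xs ≠ 0) :
    ∀ (N : ℕ) (J : (Σ i : Fin n, Fin (r i + 1)) → ℕ),
      ((∑ z, J z) + 1) * wtot r J + ((∑ z, J z) - J xs) < N →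
      mono J ∈ Submodule.map E (span ℂ (mono '' {K | ∑ z, K z = (∑ z, J z) + 1})) := by
  intro N
  induction N with
  | zero => intro J hJ; omega
  | succ N ihN =>
    intro J hμ
    have h1 : ∑ z, Function.update J xs (J xs + 1) z = (∑ z, J z) + 1 := sum_addE J xs
    have hE := Emem hEv hHv hEF hHF hmono0 hmonoStep hr hxs ((∑ z, J z) + 1)
      (Function.update J xs (J xs + 1)) h1
    have hval : (Function.update J xs (J xs + 1)) xs = J xs + 1 := by simp
    have hsub : Function.update (Function.update J xs (J xs + 1)) xs
        ((Function.update J xs (J xs + 1)) xs - 1) = J := subE_addE J xs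
    have hwJ₁ : wtot r (Function.update J xs (J xs + 1)) = wtot r J := by
      rw [wtot_addE, hxs]; omega
    rw [hsub, hval, hwJ₁] at hE
    set Mp := Submodule.map E (span ℂ (mono '' {K | ∑ z, K z = (∑ z, J z) + 1})) with hMp
    have hE1 : E (mono (Function.update J xs (J xs + 1))) ∈ Mp :=
      ⟨mono (Function.update J xs (J xs + 1)), Submodule.subset_span ⟨_, h1, rfl⟩, rfl⟩
    have hz : E (mono (Function.update J xs (J xs + 1))) -
        (gam xs * ((J xs + 1 : ℕ) : ℂ)) • mono J ∈ Mp := by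
      refine Submodule.span_le.2 ?_ hE
      rintro - ⟨K, ⟨hK1, hK2, hK3⟩, rfl⟩
      have hKxs : K xs ≤ ∑ z, K z := single_le_sum' K xs
      have hJxs : J xs ≤ ∑ z, J z := single_le_sum' J xs
      have hKJ : ∑ z, K z = ∑ z, J z := by omega
      have hμK : ((∑ z, K z) + 1) * wtot r K + ((∑ z, K z) - K xs) < N := by
        rw [hKJ]
        rcases hK3 with h3 | h3
        · have hmul : ((∑ z, J z) + 1) * (wtot r K + 1) ≤ ((∑ z, J z) + 1) * wtot r J :=
            Nat.mul_le_mul_left _ (by omega)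
          rw [Nat.mul_add, Nat.mul_one] at hmul
          omega
        · have hmul : ((∑ z, J z) + 1) * wtot r K ≤ ((∑ z, J z) + 1) * wtot r J :=
            Nat.mul_le_mul_left _ hK2
          rw [hKJ] at hKxs
          omega
      have := ihN K hμK
      rw [hKJ] at this
      exact this
    have hc : (gam xs * ((J xs + 1 : ℕ) : ℂ)) ≠ 0 :=
      mul_ne_zero hgam (Nat.cast_ne_zero.2 (by omega))
    have hfin : mono J = (gam xs * ((J xs + 1 : ℕ) : ℂ))⁻¹ •
        ((gam xs * ((J xs + 1 : ℕ) : ℂ)) • mono J) := (inv_smul_smul₀ hc _).symm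
    rw [hfin]
    refine Submodule.smul_mem _ _ ?_
    have : (gam xs * ((J xs + 1 : ℕ) : ℂ)) • mono J =
        E (mono (Function.update J xs (J xs + 1))) -
        (E (mono (Function.update J xs (J xs + 1))) -
          (gam xs * ((J xs + 1 : ℕ) : ℂ)) • mono J) := by abel
    rw [this]
    exact Submodule.sub_mem _ hE1 hz


lemma map_E_W (hEv : E v = 0)
    (hHv : ∀ x, H x v = gam x • v)
    (hEF : ∀ x, E * F x - F x * E = H x)
    (hHF : ∀ (i j : Fin n) (p : Fin (r i + 1)) (q : Fin (r j + 1)),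
      H ⟨i, p⟩ * F ⟨j, q⟩ - F ⟨j, q⟩ * H ⟨i, p⟩ =
        if h : i = j ∧ (p : ℕ) + (q : ℕ) ≤ r i then
          (-2 : ℂ) • F ⟨i, ⟨(p : ℕ) + (q : ℕ), Nat.lt_succ_of_le h.2⟩⟩
        else 0)
    (hmono0 : mono 0 = v)
    (hmonoStep : ∀ J x, mono (Function.update J x (J x + 1)) = F x (mono J))
    (hr : ∀ i, 0 < r i)
    {xs : Σ i : Fin n, Fin (r i + 1)} (hxs : (xs.2 : ℕ) = r xs.1)
    (hgam : gam xs ≠ 0) (m : ℕ) :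
    Submodule.map E (span ℂ (mono '' {K | ∑ z, K z = m + 1})) =
      span ℂ (mono '' {K | ∑ z, K z = m}) := by
  apply le_antisymm
  · rw [Submodule.map_span]
    refine Submodule.span_le.2 ?_
    rintro - ⟨-, ⟨J, hJ, rfl⟩, rfl⟩
    have hJ' : ∑ z, J z = m + 1 := hJ
    have hE := Emem hEv hHv hEF hHF hmono0 hmonoStep hr hxs (m + 1) J hJ'
    have hzmem : E (mono J) - (gam xs * ((J xs : ℕ) : ℂ)) •
        mono (Function.update J xs (J xs - 1)) ∈
        span ℂ (mono '' {K | ∑ z, K z = m}) := by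
      refine Submodule.span_mono (Set.image_mono ?_) hE
      intro K hK
      have := hK.1
      simpa using by omega
    by_cases h0 : J xs = 0
    · have he : E (mono J) = E (mono J) - (gam xs * ((J xs : ℕ) : ℂ)) •
          mono (Function.update J xs (J xs - 1)) := by
        rw [h0]
        simp
      rw [he]
      exact hzmem
    · have hsum : ∑ z, (Function.update J xs (J xs - 1)) z = m := by
        have h2 := sum_addE (Function.update J xs (J xs - 1)) xs
        rw [addE_subE J xs h0] at h2
        omega
      have he : E (mono J) = (E (mono J) - (gam xs * ((J xs : ℕ) : ℂ)) •
          mono (Function.update J xs (J xs - 1))) + (gam xs * ((J xs : ℕ) : ℂ)) •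
          mono (Function.update J xs (J xs - 1)) := by abel
      rw [he]
      exact Submodule.add_mem _ hzmem
        (Submodule.smul_mem _ _ (Submodule.subset_span ⟨_, hsum, rfl⟩))
  · refine Submodule.span_le.2 ?_
    rintro - ⟨J, hJ, rfl⟩
    have hmm := mono_mem_map hEv hHv hEF hHF hmono0 hmonoStep hr hxs hgam
      (((∑ z, J z) + 1) * wtot r J + ((∑ z, J z) - J xs) + 1) J (by omega)
    rw [hJ] at hmm
    exact hmm


end Main
end Stmt11

/-- the space of singular vectors of weight `|Λ| - 2m` in a tensor product
`M^{(r₁)}_{λ₁}(γ₁) ⊗ ⋯ ⊗ M^{(rₙ)}_{λₙ}(γₙ)` of confluent Verma modules has dimension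
`C(|R|+n+m-2, m)`, provided `γ₁^{(r₁)} ≠ 0`.

The tensor product of confluent Verma modules is axiomatized: `V` is a vector space with
commuting lowering operators `F_x` (for `x = (i,p)`, `i = 1,…,n`, `p = 0,…,rᵢ`), Cartan
operators `H_x`, the diagonal raising operator `E = ∑ᵢ E_{i,0}`, and a highest weight
vector `v` with `E v = 0` and `H_x v = γ_x v` (so `γ_{(i,0)} = λᵢ`), satisfying the
truncated current algebra relations `[E, F_x] = H_x` and
`[H_{(i,p)}, F_{(j,q)}] = -2 δ_{ij} F_{(i,p+q)}` (zero when `p+q > rᵢ`), and such that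
the monomials `F^J v` form a basis of `V`.  The singular space is the intersection of
the span of the monomials of total degree `m` with the kernel of `E`. -/
theorem stmt_11 (n : ℕ) (hn : 0 < n) (r : Fin n → ℕ) (hr : ∀ i, 0 < r i) (m : ℕ)
    (V : Type*) [AddCommGroup V] [Module ℂ V]
    (E : Module.End ℂ V)
    (F H : (Σ i : Fin n, Fin (r i + 1)) → Module.End ℂ V)
    (v : V) (gam : (Σ i : Fin n, Fin (r i + 1)) → ℂ)
    (hEv : E v = 0)
    (hHv : ∀ x, H x v = gam x • v)
    (hgam : gam ⟨⟨0, hn⟩, Fin.last (r ⟨0, hn⟩)⟩ ≠ 0)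
    (hEF : ∀ x, E * F x - F x * E = H x)
    (hHF : ∀ (i j : Fin n) (p : Fin (r i + 1)) (q : Fin (r j + 1)),
      H ⟨i, p⟩ * F ⟨j, q⟩ - F ⟨j, q⟩ * H ⟨i, p⟩ =
        if h : i = j ∧ (p : ℕ) + (q : ℕ) ≤ r i then
          (-2 : ℂ) • F ⟨i, ⟨(p : ℕ) + (q : ℕ), by have := h.2; omega⟩⟩
        else 0)
    (hFF : ∀ x y, F x * F y = F y * F x)
    (hHH : ∀ x y, H x * H y = H y * H x)
    (mono : ((Σ i : Fin n, Fin (r i + 1)) → ℕ) → V)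
    (hmono0 : mono 0 = v)
    (hmonoStep : ∀ J x, mono (Function.update J x (J x + 1)) = F x (mono J))
    (hLI : LinearIndependent ℂ mono)
    (hspan : Submodule.span ℂ (Set.range mono) = ⊤) :
    Module.finrank ℂ
        ↥(Submodule.span ℂ (mono '' {J | ∑ x, J x = m}) ⊓ LinearMap.ker E) =
      Nat.choose ((∑ i, r i) + n + m - 2) m := by
  classical
  have hxs : (((⟨⟨0, hn⟩, Fin.last (r ⟨0, hn⟩)⟩ : Σ i : Fin n, Fin (r i + 1))).2 : ℕ) =
      r (⟨⟨0, hn⟩, Fin.last (r ⟨0, hn⟩)⟩ : Σ i : Fin n, Fin (r i + 1)).1 := rfl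
  -- finiteness of weight sets
  have hfin : ∀ k, ({J : (Σ i : Fin n, Fin (r i + 1)) → ℕ | ∑ z, J z = k}).Finite := by
    intro k
    refine Set.Finite.subset
      (Set.Finite.pi (t := fun _ : (Σ i : Fin n, Fin (r i + 1)) => Set.Iic k)
        (fun _ => Set.finite_Iic k)) ?_
    intro J hJ
    have hJ' : ∑ z, J z = k := hJ
    intro x _
    have := Stmt11.single_le_sum' J x
    simp only [Set.mem_Iic]
    omega
  -- cardinality of each weight space
  have hN : Fintype.card (Σ i : Fin n, Fin (r i + 1)) = (∑ i, r i) + n := by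
    simp [Fintype.card_sigma, Fintype.card_fin, Finset.sum_add_distrib]
  have hrank : ∀ k, Module.finrank ℂ
      (Submodule.span ℂ (mono '' {J : (Σ i : Fin n, Fin (r i + 1)) → ℕ | ∑ z, J z = k})) =
      ((∑ i, r i) + n + k - 1).choose k := by
    intro k
    haveI : Fintype {J : (Σ i : Fin n, Fin (r i + 1)) → ℕ // ∑ z, J z = k} :=
      (hfin k).fintype
    have himg : mono '' {J : (Σ i : Fin n, Fin (r i + 1)) → ℕ | ∑ z, J z = k} =
        Set.range (mono ∘ (Subtype.val :
          {J : (Σ i : Fin n, Fin (r i + 1)) → ℕ // ∑ z, J z = k} → _)) := by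
      rw [Set.range_comp, Subtype.range_coe_subtype]
    rw [himg, finrank_span_eq_card (hLI.comp Subtype.val Subtype.val_injective)]
    have hcard : Fintype.card {J : (Σ i : Fin n, Fin (r i + 1)) → ℕ // ∑ z, J z = k} =
        Fintype.card (Sym ((Σ i : Fin n, Fin (r i + 1))) k) :=
      Fintype.card_congr (Sym.equivNatSumOfFintype _ k).symm
    rw [hcard, Sym.card_sym_eq_choose, hN]
  -- rank-nullity for E restricted to the weight space
  haveI : FiniteDimensional ℂ
      (Submodule.span ℂ (mono '' {J : (Σ i : Fin n, Fin (r i + 1)) → ℕ | ∑ x, J x = m})) :=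
    FiniteDimensional.span_of_finite ℂ ((hfin m).image mono)
  have hrn := LinearMap.finrank_range_add_finrank_ker
    (E.domRestrict (Submodule.span ℂ
      (mono '' {J : (Σ i : Fin n, Fin (r i + 1)) → ℕ | ∑ x, J x = m})))
  rw [LinearMap.range_domRestrict, LinearMap.ker_domRestrict] at hrn
  have hker : Module.finrank ℂ
      (Submodule.comap (Submodule.span ℂ
        (mono '' {J : (Σ i : Fin n, Fin (r i + 1)) → ℕ | ∑ x, J x = m})).subtype
        (LinearMap.ker E)) =
      Module.finrank ℂ
        ↥(Submodule.span ℂ (mono '' {J | ∑ x, J x = m}) ⊓ LinearMap.ker E) := by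
    have hcomap : Submodule.comap (Submodule.span ℂ
        (mono '' {J : (Σ i : Fin n, Fin (r i + 1)) → ℕ | ∑ x, J x = m})).subtype
        (LinearMap.ker E) =
        Submodule.comap (Submodule.span ℂ
        (mono '' {J : (Σ i : Fin n, Fin (r i + 1)) → ℕ | ∑ x, J x = m})).subtype
        (Submodule.span ℂ (mono '' {J | ∑ x, J x = m}) ⊓ LinearMap.ker E) := by
      rw [Submodule.comap_inf, Submodule.comap_subtype_self, top_inf_eq]
    rw [hcomap]
    exact LinearEquiv.finrank_eq (Submodule.comapSubtypeEquivOfLe inf_le_left)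
  rw [hker] at hrn
  have hN2 : 2 ≤ (∑ i, r i) + n := by
    have h1 := hr ⟨0, hn⟩
    have h2 : r ⟨0, hn⟩ ≤ ∑ i, r i :=
      Finset.single_le_sum (fun i _ => Nat.zero_le (r i)) (Finset.mem_univ _)
    have h3 : 1 ≤ ∑ i, r i := h1.trans_le h2
    have h4 : 1 ≤ n := hn
    exact Nat.add_le_add h3 h4
  rcases m with _ | m'
  · -- m = 0
    have hset : {J : (Σ i : Fin n, Fin (r i + 1)) → ℕ | ∑ x, J x = 0} = {0} := by
      ext J
      simp only [Set.mem_setOf_eq, Set.mem_singleton_iff]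
      constructor
      · intro h
        funext z
        have := Finset.sum_eq_zero_iff.1 h z (Finset.mem_univ z)
        simpa using this
      · rintro rfl
        simp
    have hmap0 : Submodule.map E (Submodule.span ℂ
        (mono '' {J : (Σ i : Fin n, Fin (r i + 1)) → ℕ | ∑ x, J x = 0})) = ⊥ := by
      rw [hset, Set.image_singleton, hmono0, Submodule.map_span, Set.image_singleton, hEv]
      simp
    rw [hmap0] at hrn
    rw [finrank_bot] at hrn
    have h0 := hrank 0
    simp only [Nat.add_zero, Nat.choose_zero_right] at h0 ⊢
    rw [h0] at hrn
    simpa using hrn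
  · -- m = m' + 1
    have hmap := Stmt11.map_E_W hEv hHv hEF hHF hmono0 hmonoStep hr hxs hgam m'
    rw [hmap] at hrn
    have h1 := hrank (m' + 1)
    have h2 := hrank m'
    have hp : ((∑ i, r i) + n + (m' + 1) - 1).choose (m' + 1) =
        ((∑ i, r i) + n + (m' + 1) - 2).choose m' +
        ((∑ i, r i) + n + (m' + 1) - 2).choose (m' + 1) := by
      have e1 : (∑ i, r i) + n + (m' + 1) - 1 = ((∑ i, r i) + n + (m' + 1) - 2) + 1 := by
        clear * - hN2
        omega
      have e2 : (∑ i, r i) + n + (m' + 1) - 2 = (∑ i, r i) + n + m' - 1 := by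
        clear * - hN2
        omega
      rw [e1]
      have := Nat.choose_succ_succ ((∑ i, r i) + n + (m' + 1) - 2) m'
      simpa using this
    have he3 : (∑ i, r i) + n + m' - 1 = (∑ i, r i) + n + (m' + 1) - 2 := by
      clear * - hN2
      omega
    rw [he3] at h2
    rw [h2, h1, hp] at hrn
    exact Nat.add_left_cancel hrn
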